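/- Let N and d be integers with N ≥ d ≥ 2 and let ε and t be real numbers with 0 < ε ≤ d and t ≥ e·d·(d·ln N + ln(d/ε)). Then (N choose d)·d·(1 − (1/d)·(1 − 1/d)^{d−1})^t ≤ ε. -/

import Mathlib

/-- Let `N ≥ d ≥ 2` be integers and `ε, t` reals with `0 < ε ≤ d`
and `t ≥ e·d·(d·ln N + ln(d/ε))`.  Then
`(N choose d)·d·(1 - (1/d)·(1 - 1/d)^(d-1))^t ≤ ε`, where the outer power is the real
power. -/
theorem stmt14 (N d : ℕ) (hd : 2 ≤ d) (hdN : d ≤ N) (ε t : ℝ) (hε : 0 < ε)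
    (hεd : ε ≤ d)
    (ht : Real.exp 1 * d * ((d : ℝ) * Real.log N + Real.log (d / ε)) ≤ t) :
    (N.choose d : ℝ) * d * (1 - (1 / (d : ℝ)) * (1 - 1 / (d : ℝ)) ^ (d - 1)) ^ t ≤ ε := by
  have hD : (2:ℝ) ≤ (d:ℝ) := by exact_mod_cast hd
  have hDpos : (0:ℝ) < d := by linarith
  have hN : (2:ℝ) ≤ (N:ℝ) := le_trans hD (by exact_mod_cast hdN)
  have hNpos : (0:ℝ) < N := by linarith
  have hd1 : (0:ℝ) < (d:ℝ) - 1 := by linarith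
  have hcast : ((d - 1 : ℕ) : ℝ) = (d:ℝ) - 1 := by
    have : 1 ≤ d := le_trans (by norm_num) hd
    push_cast [Nat.cast_sub this]; ring
  have h12 : 1/(d:ℝ) ≤ 1/2 := by
    rw [div_le_div_iff₀ hDpos (by norm_num)]; linarith
  have h1dpos : (0:ℝ) ≤ 1/(d:ℝ) := by positivity
  -- step 1 : exp(-1) ≤ (1 - 1/d)^(d-1)
  have hbase : Real.exp (-(1/((d:ℝ)-1))) ≤ 1 - 1/(d:ℝ) := by
    have h1 : 1/((d:ℝ)-1) + 1 ≤ Real.exp (1/((d:ℝ)-1)) := Real.add_one_le_exp _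
    rw [Real.exp_neg]
    rw [inv_le_iff_one_le_mul₀ (Real.exp_pos _)]
    have h2 : (1/((d:ℝ)-1) + 1) * (1 - 1/(d:ℝ)) = 1 := by field_simp; ring
    nlinarith [Real.exp_pos (1/((d:ℝ)-1)), mul_le_mul_of_nonneg_right h1
      (by linarith : (0:ℝ) ≤ 1 - 1/(d:ℝ))]
  have hq : Real.exp (-1) ≤ (1 - 1/(d:ℝ)) ^ (d - 1) := by
    calc Real.exp (-1) = Real.exp (-(1/((d:ℝ)-1))) ^ (d-1) := by
          rw [← Real.exp_nat_mul, hcast]; congr 1; field_simp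
      _ ≤ (1 - 1/(d:ℝ)) ^ (d-1) :=
          pow_le_pow_left₀ (le_of_lt (Real.exp_pos _)) hbase _
  -- step 2 : 1 - p ≤ exp(-1/(e d)), and 0 ≤ 1 - p
  set p : ℝ := (1 / (d : ℝ)) * (1 - 1 / (d : ℝ)) ^ (d - 1) with hp
  have hqle1 : (1 - 1/(d:ℝ)) ^ (d - 1) ≤ 1 := by
    exact pow_le_one₀ (by linarith) (by linarith)
  have hple : p ≤ 1/2 := by
    have : 1/(d:ℝ) ≤ 1/2 := by
      rw [div_le_div_iff₀ hDpos (by norm_num)]; linarith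
    calc p ≤ (1/(d:ℝ)) * 1 := by
          apply mul_le_mul_of_nonneg_left hqle1; positivity
      _ ≤ 1/2 := by linarith
  have hpge : 1/(Real.exp 1 * (d:ℝ)) ≤ p := by
    have : Real.exp (-1) = 1/Real.exp 1 := by
      rw [Real.exp_neg]; ring
    rw [hp]
    calc 1/(Real.exp 1 * (d:ℝ)) = (1/(d:ℝ)) * (1/Real.exp 1) := by ring
      _ ≤ (1/(d:ℝ)) * (1 - 1/(d:ℝ)) ^ (d - 1) := by
          apply mul_le_mul_of_nonneg_left (by rw [← this]; exact hq); positivity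
  have hed : (0:ℝ) < Real.exp 1 * (d:ℝ) := by positivity
  have h1p : 1 - p ≤ Real.exp (-(1/(Real.exp 1 * (d:ℝ)))) := by
    have := Real.add_one_le_exp (-(1/(Real.exp 1 * (d:ℝ))))
    linarith
  have h1ppos : (0:ℝ) ≤ 1 - p := by linarith
  -- step 3 : t ≥ 0 and rpow bound
  have hS : 0 ≤ (d:ℝ) * Real.log N + Real.log ((d:ℝ)/ε) := by
    have h1 : 0 ≤ Real.log N := Real.log_nonneg (by linarith)
    have h2 : 0 ≤ Real.log ((d:ℝ)/ε) := Real.log_nonneg (by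
      rw [le_div_iff₀ hε]; linarith)
    positivity
  have ht0 : 0 ≤ t := le_trans (by positivity) ht
  have hrpow : (1 - p) ^ t ≤ Real.exp (-(1/(Real.exp 1 * (d:ℝ)))) ^ t :=
    Real.rpow_le_rpow h1ppos h1p ht0
  have hexp : Real.exp (-(1/(Real.exp 1 * (d:ℝ)))) ^ t
      = Real.exp (-(t/(Real.exp 1 * (d:ℝ)))) := by
    rw [← Real.exp_one_rpow (-(1/(Real.exp 1 * (d:ℝ)))),
      ← Real.rpow_mul (le_of_lt (Real.exp_pos 1)), Real.exp_one_rpow]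
    congr 1; ring
  have hexp2 : Real.exp (-(t/(Real.exp 1 * (d:ℝ))))
      ≤ Real.exp (-((d:ℝ) * Real.log N + Real.log ((d:ℝ)/ε))) := by
    apply Real.exp_le_exp.mpr
    rw [neg_le_neg_iff, le_div_iff₀ hed]
    calc ((d:ℝ) * Real.log N + Real.log ((d:ℝ)/ε)) * (Real.exp 1 * (d:ℝ))
        = Real.exp 1 * d * ((d : ℝ) * Real.log N + Real.log ((d:ℝ) / ε)) := by ring
      _ ≤ t := ht
  have hexp3 : Real.exp (-((d:ℝ) * Real.log N + Real.log ((d:ℝ)/ε)))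
      = ε / ((d:ℝ) * (N:ℝ)^d) := by
    rw [neg_add, Real.exp_add, Real.exp_neg, Real.exp_neg,
      Real.exp_log (by positivity : (0:ℝ) < (d:ℝ)/ε)]
    rw [show (d:ℝ) * Real.log N = ((d:ℕ):ℝ) * Real.log N from rfl,
      Real.exp_nat_mul, Real.exp_log hNpos]
    field_simp
  have hchoose : (N.choose d : ℝ) ≤ (N:ℝ)^d := by
    exact_mod_cast Nat.choose_le_pow N d
  have hNd : (0:ℝ) < (N:ℝ)^d := by positivity
  calc (N.choose d : ℝ) * d * (1 - p) ^ t
      ≤ (N:ℝ)^d * d * (ε / ((d:ℝ) * (N:ℝ)^d)) := by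
        apply mul_le_mul
        · apply mul_le_mul_of_nonneg_right hchoose (le_of_lt hDpos)
        · rw [← hexp3]
          exact le_trans hrpow (by rw [hexp]; exact hexp2)
        · exact Real.rpow_nonneg h1ppos t
        · positivity
    _ = ε := by field_simp
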